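/- Let F be a finite field of characteristic p and let B be a commutative ring. If χ₁, χ₂ : B → F are ring homomorphisms with equal kernels, ker χ₁ = ker χ₂, then there exists a natural number m such that χ₂ = frob_F^m ∘ χ₁, where frob_F : F → F is the Frobenius ring homomorphism a ↦ a^p. -/

import Mathlib

open Polynomial

/-- If `F` is a finite field of characteristic `p` and `χ₁ χ₂ : B →+* F` are
ring homomorphisms with equal kernels, then `χ₂ = frob_F^m ∘ χ₁` for some `m : ℕ`. -/
theorem eq_frobenius_comp_of_ker_eq
    (p : ℕ) [Fact p.Prime]
    (F : Type*) [Field F] [Finite F] [CharP F p]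
    (B : Type*) [CommRing B]
    (χ₁ χ₂ : B →+* F) (h : RingHom.ker χ₁ = RingHom.ker χ₂) :
    ∃ m : ℕ, χ₂ = (iterateFrobenius F p m).comp χ₁ := by
  classical
  cases nonempty_fintype F
  have hp := (Fact.out : p.Prime)
  -- the quotient field
  let Q := B ⧸ RingHom.ker χ₁
  let φ₁ : Q →+* F := RingHom.kerLift χ₁
  have hφ₁ : Function.Injective φ₁ := RingHom.kerLift_injective χ₁
  let φ₂ : Q →+* F := Ideal.Quotient.lift _ χ₂ (fun a ha => by
    rw [h] at ha; exact ha)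
  have hφ₂mk : ∀ b : B, φ₂ (Ideal.Quotient.mk _ b) = χ₂ b := fun b => rfl
  have hφ₁mk : ∀ b : B, φ₁ (Ideal.Quotient.mk _ b) = χ₁ b := fun b => rfl
  haveI : IsDomain Q := by
    haveI : (RingHom.ker χ₁).IsPrime := RingHom.ker_isPrime χ₁
    infer_instance
  haveI : Finite Q := Finite.of_injective φ₁ hφ₁
  letI : Field Q := (Finite.isField_of_domain Q).toField
  haveI : CharP Q p := by
    obtain ⟨q, hq⟩ := CharP.exists Q
    haveI := hq
    haveI : CharP F q := charP_of_injective_ringHom hφ₁ q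
    rwa [CharP.eq F this ‹CharP F p›] at hq
  letI : Algebra (ZMod p) Q := ZMod.algebra _ _
  letI : Algebra (ZMod p) F := ZMod.algebra _ _
  -- upgrade to algebra homs
  let ψ₁ : Q →ₐ[ZMod p] F :=
    { φ₁ with commutes' := fun r =>
        RingHom.congr_fun (RingHom.ext_zmod (φ₁.comp (algebraMap (ZMod p) Q))
          (algebraMap (ZMod p) F)) r }
  let ψ₂ : Q →ₐ[ZMod p] F :=
    { φ₂ with commutes' := fun r =>
        RingHom.congr_fun (RingHom.ext_zmod (φ₂.comp (algebraMap (ZMod p) Q))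
          (algebraMap (ZMod p) F)) r }
  -- lift `ψ₂ ∘ ψ₁⁻¹` to an automorphism of `F`
  let e : Q ≃ₐ[ZMod p] ψ₁.fieldRange := AlgEquiv.ofInjectiveField ψ₁
  let ϕ : ψ₁.fieldRange →ₐ[ZMod p] F := ψ₂.comp e.symm.toAlgHom
  let τ : F →ₐ[ZMod p] F := ϕ.liftNormal F
  have hτ : ∀ q : Q, τ (ψ₁ q) = ψ₂ q := by
    intro q
    have h1 : ψ₁ q = algebraMap ψ₁.fieldRange F (e q) := rfl
    rw [h1, AlgHom.liftNormal_commutes]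
    show ψ₂ (e.symm (e q)) = ψ₂ q
    rw [AlgEquiv.symm_apply_apply]
  haveI : FiniteDimensional (ZMod p) F := Module.Finite.of_finite 
  let τ' : F ≃ₐ[ZMod p] F := AlgEquiv.ofBijective τ τ.bijective
  -- frobenius as an algebra automorphism
  let g : F ≃ₐ[ZMod p] F := AlgEquiv.ofRingEquiv (f := frobeniusEquiv F p)
    (fun x => by
      show (algebraMap (ZMod p) F x) ^ p = algebraMap (ZMod p) F x
      rw [← map_pow, ZMod.pow_card])
  have hg1 : ∀ y : F, g y = y ^ p := fun y => rfl
  have hg : ∀ (m : ℕ) (x : F), (g ^ m) x = x ^ p ^ m := by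
    intro m
    induction m with
    | zero => intro x; simp
    | succ k ih =>
        intro x
        rw [pow_succ', AlgEquiv.mul_apply, ih, hg1, ← pow_mul, mul_comm, pow_succ']
  -- the Galois group is generated by frobenius
  set n := Module.finrank (ZMod p) F with hn
  have hcardF : Fintype.card F = p ^ n := by
    have := Module.card_eq_pow_finrank (K := ZMod p) (V := F)
    rwa [ZMod.card] at this
  have hn0 : n ≠ 0 := by
    intro h0
    rw [h0, pow_zero] at hcardF
    exact Fintype.one_lt_card.ne' hcardF
  have hGcard : Fintype.card (F ≃ₐ[ZMod p] F) = n := by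
    rw [← Nat.card_eq_fintype_card]; exact IsGalois.card_aut_eq_finrank ..
  have hgn : g ^ n = 1 := by
    ext x
    rw [hg]
    show x ^ p ^ n = x
    rw [← hcardF]
    exact FiniteField.pow_card x
  have horder : orderOf g = n := by
    have hdvd : orderOf g ∣ n := orderOf_dvd_of_pow_eq_one hgn
    rcases Nat.lt_or_ge (orderOf g) n with hlt | hge
    · exfalso
      set i := orderOf g with hi
      have hi0 : 0 < i := orderOf_pos g
      have hfix : ∀ x : F, x ^ p ^ i = x := by
        intro x
        have := pow_orderOf_eq_one g
        rw [← hg i x, this]; rfl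
      -- all of F consists of roots of X^(p^i) - X
      have hne : (X ^ p ^ i - X : F[X]) ≠ 0 :=
        FiniteField.X_pow_card_pow_sub_X_ne_zero F hi0.ne' hp.one_lt
      have hsub : (Finset.univ : Finset F) ⊆ (X ^ p ^ i - X : F[X]).roots.toFinset := by
        intro x _
        rw [Multiset.mem_toFinset, mem_roots hne]
        simp [hfix x, sub_eq_zero]
      have hle : Fintype.card F ≤ p ^ i := by
        calc Fintype.card F = (Finset.univ : Finset F).card := rfl
          _ ≤ (X ^ p ^ i - X : F[X]).roots.toFinset.card := Finset.card_le_card hsub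
          _ ≤ Multiset.card (X ^ p ^ i - X : F[X]).roots := Multiset.toFinset_card_le _
          _ ≤ (X ^ p ^ i - X : F[X]).natDegree := Polynomial.card_roots' _
          _ = p ^ i := FiniteField.X_pow_card_pow_sub_X_natDegree_eq F hi0.ne' hp.one_lt
      rw [hcardF] at hle
      exact absurd hle (not_le.mpr (Nat.pow_lt_pow_right hp.one_lt hlt))
    · exact le_antisymm (Nat.le_of_dvd (Nat.pos_of_ne_zero hn0) hdvd) hge
  -- hence every automorphism is a power of frobenius
  have hmem : τ' ∈ Submonoid.powers g := by
    rw [mem_powers_iff_mem_zpowers]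
    have : Subgroup.zpowers g = ⊤ := by
      apply Subgroup.eq_top_of_card_eq
      rw [Nat.card_zpowers, horder, Nat.card_eq_fintype_card, hGcard]
    rw [this]; trivial
  obtain ⟨m, hm⟩ := hmem
  refine ⟨m, ?_⟩
  ext b
  have h1 : χ₂ b = τ' (χ₁ b) := (hτ (Ideal.Quotient.mk _ b)).symm
  have h2 : τ' (χ₁ b) = (χ₁ b) ^ p ^ m := by rw [← hm, hg]
  show χ₂ b = iterateFrobenius F p m (χ₁ b)
  rw [h1, h2, iterateFrobenius_def]
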